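/- Let δ > 0, x ∈ ℝ, and r ∼ Unif([-δ/2, δ/2)). Define Q_{r,δ}(x) = δ·⌊(x - r)/δ⌉ + r. Then the probability that Q_{r,δ}(x) - r = 0 equals max(0, 1 - |x/δ|). Consequently, for a vector v ∈ ℝⁿ (quantized coordinate-wise with the same shift r applied to each coordinate independently in distribution), E[‖Q_{r,δ}(v) - r·1‖₀] ≤ ‖v‖₁/δ. -/

import Mathlib

open MeasureTheory

lemma zeroSet_eq (δ x : ℝ) (hδ : 0 < δ) :
    {r : ℝ | δ * ((round ((x - r) / δ) : ℤ) : ℝ) = 0} = Set.Ioc (x - δ/2) (x + δ/2) := by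
  ext r
  have h1 : δ * ((round ((x - r) / δ) : ℤ) : ℝ) = 0 ↔ round ((x - r) / δ) = 0 := by
    rw [mul_eq_zero]
    simp [hδ.ne']
  rw [Set.mem_setOf_eq, h1, round_eq_zero_iff, Set.mem_Ico, Set.mem_Ioc,
    le_div_iff₀ hδ, div_lt_iff₀ hδ]
  constructor
  · rintro ⟨h2, h3⟩; constructor <;> nlinarith
  · rintro ⟨h2, h3⟩; constructor <;> nlinarith

lemma vol_inter (a b c d : ℝ) :
    volume (Set.Ico a b ∩ Set.Ioc c d) = ENNReal.ofReal (min b d - max a c) := by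
  apply le_antisymm
  · calc volume (Set.Ico a b ∩ Set.Ioc c d) ≤ volume (Set.Icc (max a c) (min b d)) := by
          apply measure_mono
          rintro r ⟨⟨h1, h2⟩, h3, h4⟩
          exact ⟨max_le h1 h3.le, le_min h2.le h4⟩
      _ = ENNReal.ofReal (min b d - max a c) := Real.volume_Icc
  · calc ENNReal.ofReal (min b d - max a c) = volume (Set.Ioo (max a c) (min b d)) :=
          Real.volume_Ioo.symm
      _ ≤ volume (Set.Ico a b ∩ Set.Ioc c d) := by
          apply measure_mono
          rintro r ⟨h1, h2⟩
          rw [max_lt_iff] at h1; rw [lt_min_iff] at h2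
          exact ⟨⟨h1.1.le, h2.1⟩, h1.2, h2.2.le⟩

lemma meas_zero (δ x : ℝ) (hδ : 0 < δ) :
    volume (Set.Ico (-δ/2) (δ/2) ∩ Set.Ioc (x - δ/2) (x + δ/2))
      = ENNReal.ofReal (δ - |x|) := by
  rw [vol_inter]
  congr 1
  rcases le_total x 0 with h | h
  · rw [abs_of_nonpos h, min_eq_right (by linarith), max_eq_left (by linarith)]
    ring
  · rw [abs_of_nonneg h, min_eq_left (by linarith), max_eq_right (by linarith)]
    ring

theorem randomShiftQuant_sparsity (δ : ℝ) (hδ : 0 < δ) :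
    (∀ x : ℝ,
      (volume {r ∈ Set.Ico (-δ/2) (δ/2) |
          δ * ((round ((x - r) / δ) : ℤ) : ℝ) = 0}).toReal / δ
        = max 0 (1 - |x / δ|)) ∧
    (∀ (n : ℕ) (v : Fin n → ℝ),
      (1 / δ) * ∫ r in Set.Ico (-δ/2) (δ/2),
          ((Finset.univ.filter
            (fun i : Fin n => δ * ((round ((v i - r) / δ) : ℤ) : ℝ) ≠ 0)).card : ℝ)
        ≤ (∑ i, |v i|) / δ) := by
  have hsep : ∀ x : ℝ, {r ∈ Set.Ico (-δ/2) (δ/2) |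
      δ * ((round ((x - r) / δ) : ℤ) : ℝ) = 0}
      = Set.Ico (-δ/2) (δ/2) ∩ Set.Ioc (x - δ/2) (x + δ/2) := by
    intro x
    rw [← zeroSet_eq δ x hδ]
    rfl
  constructor
  · intro x
    rw [hsep x, meas_zero δ x hδ]
    have habs : |x / δ| = |x| / δ := by rw [abs_div, abs_of_pos hδ]
    have htR : (ENNReal.ofReal (δ - |x|)).toReal = max 0 (δ - |x|) := by
      rcases le_total (δ - |x|) 0 with h | h
      · rw [ENNReal.ofReal_eq_zero.mpr h, max_eq_left h]; simp
      · rw [ENNReal.toReal_ofReal h, max_eq_right h]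
    rw [htR, habs]
    rcases le_total (δ - |x|) 0 with h | h
    · rw [max_eq_left h, max_eq_left]
      · simp
      · have : 1 ≤ |x| / δ := (one_le_div hδ).mpr (by linarith)
        linarith
    · rw [max_eq_right h, max_eq_right]
      · rw [sub_div, div_self hδ.ne']
      · have : |x| / δ ≤ 1 := (div_le_one hδ).mpr (by linarith)
        linarith
  · intro n v
    set Ico := Set.Ico (-δ/2) (δ/2) with hIco
    have hfun : ∀ r : ℝ, ((Finset.univ.filter
        (fun i : Fin n => δ * ((round ((v i - r) / δ) : ℤ) : ℝ) ≠ 0)).card : ℝ)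
        = ∑ i : Fin n, (Set.Ioc (v i - δ/2) (v i + δ/2))ᶜ.indicator
            (fun _ => (1:ℝ)) r := by
      intro r
      rw [Finset.card_filter]
      push_cast
      apply Finset.sum_congr rfl
      intro i _
      have hm : δ * ((round ((v i - r) / δ) : ℤ) : ℝ) = 0 ↔
          r ∈ Set.Ioc (v i - δ/2) (v i + δ/2) := by
        rw [← zeroSet_eq δ (v i) hδ]; rfl
      by_cases h : δ * ((round ((v i - r) / δ) : ℤ) : ℝ) = 0
      · rw [if_neg (not_not.mpr h),
          Set.indicator_of_notMem (Set.notMem_compl_iff.mpr (hm.mp h))]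
      · rw [if_pos h, Set.indicator_of_mem (Set.mem_compl fun hc => h (hm.mpr hc))]
    have hint : ∀ i : Fin n, Integrable
        ((Set.Ioc (v i - δ/2) (v i + δ/2))ᶜ.indicator (fun _ => (1:ℝ)))
        (volume.restrict Ico) := by
      intro i
      rw [integrable_indicator_iff measurableSet_Ioc.compl]
      apply (integrableOn_const_iff (by simp)).mpr
      right
      calc (volume.restrict Ico) (Set.Ioc (v i - δ/2) (v i + δ/2))ᶜ
          ≤ volume Ico := by
            rw [Measure.restrict_apply measurableSet_Ioc.compl]
            exact measure_mono Set.inter_subset_right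
        _ < ⊤ := by rw [hIco, Real.volume_Ico]; exact ENNReal.ofReal_lt_top
    calc (1 / δ) * ∫ r in Ico, ((Finset.univ.filter
            (fun i : Fin n => δ * ((round ((v i - r) / δ) : ℤ) : ℝ) ≠ 0)).card : ℝ)
        = (1 / δ) * ∑ i : Fin n, ∫ r in Ico,
            (Set.Ioc (v i - δ/2) (v i + δ/2))ᶜ.indicator (fun _ => (1:ℝ)) r := by
          congr 1
          simp only [hfun]
          exact integral_finset_sum Finset.univ (fun i _ => hint i)
      _ ≤ (1 / δ) * ∑ i : Fin n, |v i| := by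
          apply mul_le_mul_of_nonneg_left _ (by positivity)
          apply Finset.sum_le_sum
          intro i _
          rw [integral_indicator_const (1:ℝ) measurableSet_Ioc.compl, measureReal_def,
            Measure.restrict_apply measurableSet_Ioc.compl, smul_eq_mul, mul_one]
          have hkey : volume ((Set.Ioc (v i - δ/2) (v i + δ/2))ᶜ ∩ Ico)
              ≤ ENNReal.ofReal |v i| := by
            have hsplit : volume (Ico ∩ Set.Ioc (v i - δ/2) (v i + δ/2))
                + volume (Ico \ Set.Ioc (v i - δ/2) (v i + δ/2)) = volume Ico :=
              measure_inter_add_diff Ico measurableSet_Ioc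
            have hIcoV : volume Ico = ENNReal.ofReal δ := by
              rw [hIco, Real.volume_Ico]; congr 1; ring
            have hz := meas_zero δ (v i) hδ
            have heq : (Set.Ioc (v i - δ/2) (v i + δ/2))ᶜ ∩ Ico
                = Ico \ Set.Ioc (v i - δ/2) (v i + δ/2) := by
              rw [Set.diff_eq, Set.inter_comm]
            rw [heq]
            have h2 : ENNReal.ofReal (δ - |v i|)
                + volume (Ico \ Set.Ioc (v i - δ/2) (v i + δ/2)) = volume Ico := by
              rw [← hz]; exact hsplit
            have h3 : ENNReal.ofReal (δ - |v i|)
                + volume (Ico \ Set.Ioc (v i - δ/2) (v i + δ/2))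
                ≤ ENNReal.ofReal (δ - |v i|) + ENNReal.ofReal |v i| := by
              rw [h2, hIcoV]
              calc ENNReal.ofReal δ = ENNReal.ofReal ((δ - |v i|) + |v i|) := by
                    congr 1; ring
                _ ≤ _ := ENNReal.ofReal_add_le
            exact (ENNReal.add_le_add_iff_left ENNReal.ofReal_ne_top).mp h3
          exact ENNReal.toReal_le_of_le_ofReal (abs_nonneg _) hkey
      _ = (∑ i, |v i|) / δ := by rw [one_div, inv_mul_eq_div]
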